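/- Let R be a commutative ring of prime characteristic p and let φ be an e-iterated Frobenius splitting of R for some e ≥ 1. If I and J are φ-compatible ideals of R, then I + J and I ∩ J are φ-compatible, and moreover I + J is a radical ideal. -/

import Mathlib

/-- `φ : R → R` is an `e`-iterated Frobenius splitting of `R` (char `p`):
an additive map with `φ (r ^ p ^ e * x) = r * φ x` and `φ 1 = 1`. -/
def IsFrobSplitting {R : Type*} [CommRing R] (p e : ℕ) (φ : R → R) : Prop :=
  (∀ x y : R, φ (x + y) = φ x + φ y) ∧
  (∀ r x : R, φ (r ^ p ^ e * x) = r * φ x) ∧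
  φ 1 = 1

lemma frob_compatible_radical {R : Type*} [CommRing R]
    (p : ℕ) [Fact p.Prime] (e : ℕ) (he : 1 ≤ e)
    (φ : R → R) (hφ : IsFrobSplitting p e φ)
    (K : Ideal R) (hK : ∀ x ∈ K, φ x ∈ K) : K.IsRadical := by
  obtain ⟨hadd, hlin, hone⟩ := hφ
  have key : ∀ (r : R), φ (r ^ p ^ e) = r := fun r => by
    have := hlin r 1
    simpa [hone] using this
  intro x hx
  obtain ⟨n, hn⟩ := hx
  have hpe : 2 ≤ p ^ e :=
    le_trans (Fact.out : p.Prime).two_le (Nat.le_self_pow (by omega) p)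
  -- x ^ ((p^e)^n) ∈ K
  have hbig : x ^ (p ^ e) ^ n ∈ K := by
    have hle : n ≤ (p ^ e) ^ n := (Nat.lt_two_pow_self (n := n)).le.trans (Nat.pow_le_pow_left hpe n)
    have : x ^ (p ^ e) ^ n = x ^ n * x ^ ((p ^ e) ^ n - n) := by
      rw [← pow_add]; congr 1; omega
    rw [this]
    exact K.mul_mem_right _ hn
  -- induction down
  have down : ∀ k : ℕ, x ^ (p ^ e) ^ k ∈ K → x ∈ K := by
    intro k
    induction k with
    | zero => simp
    | succ k ih =>
      intro h
      apply ih
      have : x ^ (p ^ e) ^ (k + 1) = (x ^ (p ^ e) ^ k) ^ p ^ e := by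
        rw [pow_succ, pow_mul]
      rw [this] at h
      have := hK _ h
      rwa [key] at this
  exact down n hbig

/-- If `I` and `J` are ideals compatible with an `e`-iterated Frobenius splitting `φ`
of `R`, then `I + J` and `I ∩ J` are `φ`-compatible and `I + J` is radical. -/
theorem sum_inter_compatible_and_sum_radical {R : Type*} [CommRing R]
    (p : ℕ) [Fact p.Prime] [CharP R p] (e : ℕ) (he : 1 ≤ e)
    (φ : R → R) (hφ : IsFrobSplitting p e φ)
    (I J : Ideal R) (hI : ∀ x ∈ I, φ x ∈ I) (hJ : ∀ x ∈ J, φ x ∈ J) :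
    (∀ x ∈ I + J, φ x ∈ I + J) ∧ (∀ x ∈ I ⊓ J, φ x ∈ I ⊓ J) ∧ (I + J).IsRadical := by
  obtain ⟨hadd, hlin, hone⟩ := hφ
  have hsum : ∀ x ∈ I + J, φ x ∈ I + J := by
    intro x hx
    rw [Submodule.add_eq_sup, Submodule.mem_sup] at hx ⊢
    obtain ⟨a, ha, b, hb, rfl⟩ := hx
    exact ⟨φ a, hI a ha, φ b, hJ b hb, (hadd a b).symm⟩
  refine ⟨hsum, fun x hx => ⟨hI x hx.1, hJ x hx.2⟩, ?_⟩
  exact frob_compatible_radical p e he φ ⟨hadd, hlin, hone⟩ (I + J) hsum
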